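/- Let ℓ ≥ 3 be an integer. Every (μ, d) ∈ U^(0)_0 is an ℕ-linear combination of (μ_0, 1), …, (μ_{2ℓ}, 1): there exist natural numbers c_0, …, c_{2ℓ} such that μ = Σ_{i=0}^{2ℓ} c_i·μ_i (pointwise) and d = Σ_{i=0}^{2ℓ} c_i. (This shows that the Ehrhart ring of the face {f ∈ STAB(G) : f⁺(V) = ℓ} is generated by the monomials T^{μ_0}, …, T^{μ_{2ℓ}}.) -/

import Mathlib

/-- `(μ, d)` belongs to `U^(n)` for the cycle of length `2ℓ+1`. -/
def inU (ℓ : ℕ) (n : ℤ) (μ : Fin (2 * ℓ + 1) → ℤ) (d : ℤ) : Prop :=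
  (∀ i, n ≤ μ i) ∧
  (∀ i : Fin (2 * ℓ + 1), μ i + μ (i + 1) ≤ d - n) ∧
  (∑ i, μ i ≤ (ℓ : ℤ) * d - n)

/-- The exponent vector `μ_i`: `μ_i(j) = 1` iff `(j - i) mod (2ℓ+1)` lies in
`{0, 2, 4, …, 2ℓ-2}`, i.e. is even and different from `2ℓ`. -/
def muV (ℓ : ℕ) (i : Fin (2 * ℓ + 1)) : Fin (2 * ℓ + 1) → ℤ := fun j =>
  if (((j : ℤ) - (i : ℤ)) % (2 * (ℓ : ℤ) + 1)) % 2 = 0 ∧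
     ((j : ℤ) - (i : ℤ)) % (2 * (ℓ : ℤ) + 1) ≠ 2 * (ℓ : ℤ)
  then 1 else 0

def g (ℓ : ℕ) (k : Fin (2*ℓ+1)) : ℤ :=
  if (k:ℤ) % 2 = 0 ∧ (k:ℤ) ≠ 2*(ℓ:ℤ) then 1 else 0

lemma key_mod (ℓ : ℕ) (i j : Fin (2*ℓ+1)) :
    ((j:ℤ) - (i:ℤ)) % (2*(ℓ:ℤ)+1) = ((j - i : Fin (2*ℓ+1)) : ℤ) := by
  have hi : (i:ℕ) ≤ 2*ℓ+1 := le_of_lt i.isLt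
  rw [Fin.sub_def]
  push_cast [hi]
  have h : (2*(ℓ:ℤ)+1 - (i:ℤ) + (j:ℤ)) = ((j:ℤ) - (i:ℤ)) + (2*(ℓ:ℤ)+1) * 1 := by ring
  rw [h, Int.add_mul_emod_self_left]

lemma muV_eq_g (ℓ : ℕ) (i j : Fin (2*ℓ+1)) : muV ℓ i j = g ℓ (j - i) := by
  unfold muV g
  rw [key_mod]

lemma g_add_one (ℓ : ℕ) (hℓ : 1 ≤ ℓ) (t : Fin (2*ℓ+1)) :
    g ℓ t + g ℓ (t+1) = if (t:ℕ) = 2*ℓ-1 then 0 else 1 := by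
  unfold g
  rcases eq_or_ne t (Fin.last (2*ℓ)) with h | h
  · have h1 : ((t+1 : Fin (2*ℓ+1)):ℕ) = 0 := by
      rw [Fin.val_add_one, if_pos h]
    have h2 : (t:ℕ) = 2*ℓ := by rw [h, Fin.val_last]
    clear h
    split_ifs <;> omega
  · have h1 : ((t+1 : Fin (2*ℓ+1)):ℕ) = (t:ℕ) + 1 := by
      rw [Fin.val_add_one, if_neg h]
    have h2 : (t:ℕ) < 2*ℓ := by
      have h3 := t.isLt
      have h4 : (t:ℕ) ≠ 2*ℓ := fun hc => h (Fin.ext (by simp [hc, Fin.val_last]))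
      omega
    clear h
    split_ifs <;> omega

lemma evens (n : ℕ) : ∑ k ∈ Finset.range (2*n), (if k % 2 = 0 then (1:ℤ) else 0) = n := by
  induction n with
  | zero => simp
  | succ m ih =>
    have h : 2*(m+1) = (2*m)+1+1 := by ring
    rw [h, Finset.sum_range_succ, Finset.sum_range_succ, ih]
    have e1 : (2*m) % 2 = 0 := by omega
    have e2 : (2*m+1) % 2 ≠ 0 := by omega
    rw [if_pos e1, if_neg e2]
    push_cast; ring

lemma g_total (ℓ : ℕ) : ∑ k, g ℓ k = (ℓ:ℤ) := by
  have hg : ∀ k : Fin (2*ℓ+1), g ℓ k =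
      if (k:ℕ) % 2 = 0 ∧ (k:ℕ) ≠ 2*ℓ then (1:ℤ) else 0 := by
    intro k; unfold g
    split_ifs with h1 h2 <;> first | rfl | (exfalso; omega)
  simp only [hg]
  rw [Fin.sum_univ_eq_sum_range (fun k => if k % 2 = 0 ∧ k ≠ 2*ℓ then (1:ℤ) else 0)]
  rw [Finset.sum_range_succ]
  have e1 : ¬((2*ℓ) % 2 = 0 ∧ 2*ℓ ≠ 2*ℓ) := by omega
  rw [if_neg e1, add_zero]
  rw [Finset.sum_congr rfl (fun k hk => ?_), evens ℓ]
  have hk' : k < 2*ℓ := Finset.mem_range.mp hk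
  have : (k % 2 = 0 ∧ k ≠ 2*ℓ) ↔ k % 2 = 0 := by omega
  simp [this]

open Fin.CommRing in
theorem stmt_8 (ℓ : ℕ) (hℓ : 3 ≤ ℓ) (μ : Fin (2 * ℓ + 1) → ℤ) (d : ℤ)
    (hμ : inU ℓ 0 μ d) (h0 : ∑ i, μ i = (ℓ : ℤ) * d) :
    ∃ c : Fin (2 * ℓ + 1) → ℕ,
      (∀ j, μ j = ∑ i, (c i : ℤ) * muV ℓ i j) ∧ d = ∑ i, (c i : ℤ) := by
  obtain ⟨hpos, hedge, -⟩ := hμ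
  set C : Fin (2*ℓ+1) → ℤ := fun i => d - μ (i-2) - μ (i-1) with hCdef
  have hCnn : ∀ i, 0 ≤ C i := by
    intro i
    have h := hedge (i-2)
    have h2 : (i-2) + 1 = i - 1 := by ring
    rw [h2] at h
    simp only [hCdef]
    linarith
  have hshift : ∀ a : Fin (2*ℓ+1), ∑ i, μ (i - a) = (ℓ:ℤ) * d := by
    intro a
    rw [← h0]
    exact Fintype.sum_equiv (Equiv.subRight a) _ _ (fun i => rfl)
  have hcard : (Finset.univ : Finset (Fin (2*ℓ+1))).card = 2*ℓ+1 := by simp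
  have hsumC : ∑ i, C i = d := by
    simp only [hCdef]
    rw [Finset.sum_sub_distrib, Finset.sum_sub_distrib, Finset.sum_const, hcard,
      hshift 2, hshift 1]
    ring
  have main : ∀ j, ∑ i, C i * g ℓ (j - i) = μ j := by
    intro j
    have expand : ∀ i : Fin (2*ℓ+1), C i * g ℓ (j - i) =
        d * g ℓ (j-i) - μ (i-2) * g ℓ (j-i) - μ (i-1) * g ℓ (j-i) := by
      intro i; simp only [hCdef]; ring
    simp only [expand]
    rw [Finset.sum_sub_distrib, Finset.sum_sub_distrib]
    have T0 : ∑ i, d * g ℓ (j - i) = d * (ℓ:ℤ) := by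
      rw [← Finset.mul_sum]
      congr 1
      rw [← g_total ℓ]
      exact Fintype.sum_equiv (Equiv.subLeft j) _ _ (fun i => rfl)
    have T2 : ∑ i, μ (i-2) * g ℓ (j - i) = ∑ m, μ m * g ℓ (j - m - 2) := by
      refine (Fintype.sum_equiv (Equiv.addRight (2 : Fin (2*ℓ+1))) _ _ (fun m => ?_)).symm
      have e1 : (Equiv.addRight (2 : Fin (2*ℓ+1))) m - 2 = m := by
        simp [Equiv.coe_addRight]
      have e2 : j - ((Equiv.addRight (2 : Fin (2*ℓ+1))) m) = j - m - 2 := by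
        simp only [Equiv.coe_addRight]; ring
      rw [e1, e2]
    have T1 : ∑ i, μ (i-1) * g ℓ (j - i) = ∑ m, μ m * g ℓ (j - m - 1) := by
      refine (Fintype.sum_equiv (Equiv.addRight (1 : Fin (2*ℓ+1))) _ _ (fun m => ?_)).symm
      have e1 : (Equiv.addRight (1 : Fin (2*ℓ+1))) m - 1 = m := by
        simp [Equiv.coe_addRight]
      have e2 : j - ((Equiv.addRight (1 : Fin (2*ℓ+1))) m) = j - m - 1 := by
        simp only [Equiv.coe_addRight]; ring
      rw [e1, e2]
    rw [T0, T1, T2]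
    have hlt : 2*ℓ-1 < 2*ℓ+1 := by omega
    have h2v : ((2 : Fin (2*ℓ+1)) : ℕ) = 2 := by
      have h' : ((2 : Fin (2*ℓ+1)) : ℕ) = 2 % (2*ℓ+1) := rfl
      rw [h', Nat.mod_eq_of_lt (by omega)]
    have ht0 : (⟨2*ℓ-1, hlt⟩ : Fin (2*ℓ+1)) + 2 = 0 := by
      apply Fin.ext
      rw [Fin.val_add, h2v, Fin.val_zero]
      rw [show (2*ℓ-1 : ℕ) + 2 = 2*ℓ+1 from by omega, Nat.mod_self]
    have hB : ∑ m, μ m * g ℓ (j - m - 2) + ∑ m, μ m * g ℓ (j - m - 1)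
        = (ℓ:ℤ) * d - μ j := by
      rw [← Finset.sum_add_distrib]
      have step : ∀ m : Fin (2*ℓ+1), μ m * g ℓ (j - m - 2) + μ m * g ℓ (j - m - 1)
          = μ m - (if m = j then μ m else 0) := by
        intro m
        have h1 : j - m - 1 = (j - m - 2) + 1 := by ring
        rw [h1, ← mul_add, g_add_one ℓ (by omega) (j - m - 2)]
        have hcond : ((j - m - 2 : Fin (2*ℓ+1)) : ℕ) = 2*ℓ-1 ↔ m = j := by
          constructor
          · intro hv
            have he : j - m - 2 = (⟨2*ℓ-1, hlt⟩ : Fin (2*ℓ+1)) := Fin.ext hv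
            linear_combination -he - ht0
          · intro hv
            have he : j - m - 2 = (⟨2*ℓ-1, hlt⟩ : Fin (2*ℓ+1)) := by
              rw [hv]; linear_combination -ht0
            rw [he]
        split_ifs with hc1 hc2 hc2
        · ring
        · exact absurd (hcond.mp hc1) hc2
        · exact absurd (hcond.mpr hc2) hc1
        · ring
      simp only [step]
      rw [Finset.sum_sub_distrib, h0, Finset.sum_ite_eq' Finset.univ j μ,
        if_pos (Finset.mem_univ j)]
    linarith [hB]
  refine ⟨fun i => (C i).toNat, fun j => ?_, ?_⟩
  · have hc : ∀ i : Fin (2*ℓ+1), (((C i).toNat : ℤ)) = C i := fun i =>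
      Int.toNat_of_nonneg (hCnn i)
    simp only [hc, muV_eq_g]
    exact (main j).symm
  · simp only [fun i => Int.toNat_of_nonneg (hCnn i)]
    exact hsumC.symm
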